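/- Let G be a cubic graph that does not have a 1-factor. If k is an integer with k ∈ S̄(G), then k ≥ 5. -/

import Mathlib

open Finset

/-- A finite loopless multigraph with vertex type `V` and edge type `E`;
`ends e` is the unordered pair of the two distinct endpoints of the edge `e`. -/
structure Multigraph (V E : Type) where
  ends : E → Sym2 V
  not_loop : ∀ e, ¬ (ends e).IsDiag

namespace Multigraph

variable {V E : Type} [Fintype V] [Fintype E] [DecidableEq V] [DecidableEq E]

/-- The edge `e` is incident with the vertex `v`. -/
def Inc (G : Multigraph V E) (v : V) (e : E) : Prop := v ∈ G.ends e

instance (G : Multigraph V E) (v : V) (e : E) : Decidable (G.Inc v e) :=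
  inferInstanceAs (Decidable (v ∈ G.ends e))

/-- The set of edges incident with `v`. -/
def incEdges (G : Multigraph V E) (v : V) : Finset E :=
  Finset.univ.filter fun e => G.Inc v e

/-- The degree of a vertex. -/
def degree (G : Multigraph V E) (v : V) : ℕ := (G.incEdges v).card

/-- `G` is `k`-regular. -/
def IsRegular (G : Multigraph V E) (k : ℕ) : Prop := ∀ v, G.degree v = k

/-- The set `N_σ` of negative edges of a signature `σ : E → ℤˣ`. -/
def negEdges (G : Multigraph V E) (σ : E → ℤˣ) : Finset E :=
  Finset.univ.filter fun e => σ e = -1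

/-- `τ` assigns a sign to every half-edge (i.e. to each edge at each of its endpoints);
it is an orientation of the signed graph `(G, σ)` if for every edge `e = uv` the two
half-edge signs multiply to `-σ e`. -/
def IsOrientation (G : Multigraph V E) (σ : E → ℤˣ) (τ : E → V → ℤˣ) : Prop :=
  ∀ e u v, G.ends e = s(u, v) → τ e u * τ e v = - σ e

/-- The boundary `δf(v) = ∑_{h at v} τ(h) f(e_h)` of `f` at `v`. -/
def boundary {R : Type} [CommRing R] (G : Multigraph V E) (τ : E → V → ℤˣ)
    (f : E → R) (v : V) : R :=
  ∑ e ∈ G.incEdges v, (((τ e v : ℤˣ) : ℤ) : R) * f e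

/-- `f` is a nowhere-zero `r`-flow on the signed graph `(G, σ)`:
for some orientation all boundaries vanish and `1 ≤ |f e| ≤ r - 1` for every edge. -/
def IsNZFlow (G : Multigraph V E) (σ : E → ℤˣ) (r : ℝ) (f : E → ℝ) : Prop :=
  ∃ τ, G.IsOrientation σ τ ∧ (∀ v, G.boundary τ f v = 0) ∧
    ∀ e, 1 ≤ |f e| ∧ |f e| ≤ r - 1

/-- `(G, σ)` admits a nowhere-zero `r`-flow. -/
def HasNZFlow (G : Multigraph V E) (σ : E → ℤˣ) (r : ℝ) : Prop :=
  ∃ f, G.IsNZFlow σ r f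

/-- `f` is a modular nowhere-zero `r`-flow on `(G, σ)`: for some orientation all
boundaries are `≡ 0 (mod r)` and `1 ≤ |f e| ≤ r - 1` for every edge. -/
def IsModularNZFlow (G : Multigraph V E) (σ : E → ℤˣ) (r : ℝ) (f : E → ℝ) : Prop :=
  ∃ τ, G.IsOrientation σ τ ∧ (∀ v, ∃ k : ℤ, G.boundary τ f v = k * r) ∧
    ∀ e, 1 ≤ |f e| ∧ |f e| ≤ r - 1

/-- `f` is an integer-valued nowhere-zero `n`-flow on `(G, σ)`. -/
def IsIntNZFlow (G : Multigraph V E) (σ : E → ℤˣ) (n : ℕ) (f : E → ℤ) : Prop :=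
  ∃ τ, G.IsOrientation σ τ ∧ (∀ v, G.boundary τ f v = 0) ∧
    ∀ e, 1 ≤ |f e| ∧ |f e| ≤ (n : ℤ) - 1

/-- `(G, σ)` admits an integer nowhere-zero `n`-flow. -/
def HasIntNZFlow (G : Multigraph V E) (σ : E → ℤˣ) (n : ℕ) : Prop :=
  ∃ f, G.IsIntNZFlow σ n f

/-- `(G, σ)` is flow-admissible: it has a nowhere-zero `r`-flow for some `r ≥ 2`. -/
def FlowAdmissible (G : Multigraph V E) (σ : E → ℤˣ) : Prop :=
  ∃ r : ℝ, 2 ≤ r ∧ G.HasNZFlow σ r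

/-- The circular flow number `F_c(G, σ)` (the least `r` admitting a nowhere-zero `r`-flow). -/
noncomputable def Fc (G : Multigraph V E) (σ : E → ℤˣ) : ℝ :=
  sInf {r : ℝ | 2 ≤ r ∧ G.HasNZFlow σ r}

/-- The integer flow number `F(G, σ)` (the least `n` admitting an integer
nowhere-zero `n`-flow). -/
noncomputable def Fi (G : Multigraph V E) (σ : E → ℤˣ) : ℕ :=
  sInf {n : ℕ | G.HasIntNZFlow σ n}

/-- The flow spectrum `S(G)` of `G`. -/
def Spectrum (G : Multigraph V E) : Set ℝ :=
  {r | ∃ σ : E → ℤˣ, G.FlowAdmissible σ ∧ G.Fc σ = r}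

/-- The integer flow spectrum `S̄(G)` of `G`. -/
def IntSpectrum (G : Multigraph V E) : Set ℕ :=
  {n | ∃ σ : E → ℤˣ, G.FlowAdmissible σ ∧ G.Fi σ = n}

/-- `F` is the edge set of a spanning `t`-regular subgraph (a `t`-factor) of `G`. -/
def IsFactor (G : Multigraph V E) (t : ℕ) (F : Finset E) : Prop :=
  ∀ v, (G.incEdges v ∩ F).card = t

/-- `G` has a `t`-factor. -/
def HasFactor (G : Multigraph V E) (t : ℕ) : Prop := ∃ F, G.IsFactor t F

/-- `G - X` is bipartite. -/
def BipartiteOff (G : Multigraph V E) (X : Finset E) : Prop :=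
  ∃ c : V → Bool, ∀ e ∉ X, ∀ u v, G.ends e = s(u, v) → c u ≠ c v

/-- `G` is bipartite. -/
def Bipartite (G : Multigraph V E) : Prop := G.BipartiteOff ∅

/-- `X` is an `r`-minimal set: some signature `σ` with `N_σ = X` has circular flow
number `r`, while no signature whose negative edge set is a proper subset of `X`
has circular flow number `r`. -/
def IsRMinimal (G : Multigraph V E) (r : ℝ) (X : Finset E) : Prop :=
  (∃ σ, G.negEdges σ = X ∧ G.FlowAdmissible σ ∧ G.Fc σ = r) ∧
  ∀ σ, G.negEdges σ ⊂ X → ¬ (G.FlowAdmissible σ ∧ G.Fc σ = r)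

/-- `X` is an `r`-minimal set of minimum cardinality. -/
def IsSmallestRMinimal (G : Multigraph V E) (r : ℝ) (X : Finset E) : Prop :=
  G.IsRMinimal r X ∧ ∀ Y, G.IsRMinimal r Y → X.card ≤ Y.card


/-- `u` and `v` are joined by an edge belonging to the edge set `F`. -/
def AdjOn (G : Multigraph V E) (F : Finset E) (u v : V) : Prop :=
  ∃ e ∈ F, G.ends e = s(u, v)

/-- `u` and `v` are connected in the spanning subgraph with edge set `F`. -/
def ReachOn (G : Multigraph V E) (F : Finset E) : V → V → Prop :=
  Relation.ReflTransGen (G.AdjOn F)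

/-- The connected component of `v` in the spanning subgraph with edge set `F`. -/
def componentOn (G : Multigraph V E) (F : Finset E) (v : V) : Set V :=
  {u | G.ReachOn F v u}

/-- The number of connected components of odd cardinality of the spanning subgraph
with edge set `F`.  For a `2`-factor `F` these components are precisely the odd
circuits of the `2`-factor. -/
noncomputable def numOddComponents (G : Multigraph V E) (F : Finset E) : ℕ :=
  Nat.card {S : Set V // (∃ v, S = G.componentOn F v) ∧ Odd (Nat.card S)}

/-- The oddness `ω(G)`: the minimum number of odd circuits in a `2`-factor of `G`. -/
noncomputable def oddness (G : Multigraph V E) : ℕ :=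
  sInf {k | ∃ F, G.IsFactor 2 F ∧ G.numOddComponents F = k}

/-- `e` is a bridge: its endpoints are disconnected after deleting `e`. -/
def IsBridge (G : Multigraph V E) (e : E) : Prop :=
  ∀ u v, G.ends e = s(u, v) → ¬ G.ReachOn (Finset.univ.erase e) u v

/-- `G` has no bridge. -/
def Bridgeless (G : Multigraph V E) : Prop := ∀ e, ¬ G.IsBridge e

/-- `c` is a proper edge coloring: edges sharing an endpoint get distinct colors. -/
def IsProperEdgeColoring (G : Multigraph V E) {k : ℕ} (c : E → Fin k) : Prop :=
  ∀ e₁ e₂, e₁ ≠ e₂ → (∃ v, G.Inc v e₁ ∧ G.Inc v e₂) → c e₁ ≠ c e₂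

/-- `G` is 3-edge-colorable. -/
def ThreeEdgeColorable (G : Multigraph V E) : Prop :=
  ∃ c : E → Fin 3, G.IsProperEdgeColoring c

/-- The resistance `r(G)`: the minimum cardinality of a color class, over all proper
4-edge-colorings of `G`. -/
noncomputable def resistance (G : Multigraph V E) : ℕ :=
  sInf {k | ∃ c : E → Fin 4, G.IsProperEdgeColoring c ∧
    ∃ i : Fin 4, (Finset.univ.filter fun e => c e = i).card = k}

/-- Since our multigraphs are loopless, `G` is (isomorphic to) `K₂³` — the cubic graph
on two vertices joined by three parallel edges — iff it has exactly two vertices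
and three edges. -/
def IsK23 (G : Multigraph V E) : Prop :=
  Fintype.card V = 2 ∧ Fintype.card E = 3

/-- `S` is an independent set of vertices (no edge joins two of its members). -/
def IsIndepSet (G : Multigraph V E) (S : Finset V) : Prop :=
  ∀ u ∈ S, ∀ v ∈ S, ∀ e : E, G.ends e ≠ s(u, v)

/-- The independence number `α(G)`. -/
noncomputable def indepNum (G : Multigraph V E) : ℕ :=
  sSup {k | ∃ S : Finset V, G.IsIndepSet S ∧ S.card = k}

/-- The maximum degree `Δ(G[X])` of the subgraph of `G` induced by the edge set `X`. -/
def maxDegreeOn (G : Multigraph V E) (X : Finset E) : ℕ :=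
  Finset.univ.sup fun v => (G.incEdges v ∩ X).card

/-- A circuit of `G` of length `n + 1`: pairwise distinct vertices `v_0, …, v_n` and
pairwise distinct edges `e_0, …, e_n` with `e_i` joining `v_i` and `v_{i+1}`
(indices mod `n + 1`). -/
structure Circuit (G : Multigraph V E) where
  n : ℕ
  vert : Fin (n + 1) → V
  edge : Fin (n + 1) → E
  vert_inj : Function.Injective vert
  edge_inj : Function.Injective edge
  ends_eq : ∀ i, G.ends (edge i) = s(vert i, vert (i + 1))

/-- The number of negative edges on a circuit. -/
def Circuit.negCount {G : Multigraph V E} (σ : E → ℤˣ) (C : G.Circuit) : ℕ :=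
  (Finset.univ.filter fun i => σ (C.edge i) = -1).card

/-- The subgraph of `(G, σ)` with edge set `F` is balanced: every circuit using only
edges of `F` contains an even number of negative edges. -/
def BalancedOn (G : Multigraph V E) (σ : E → ℤˣ) (F : Finset E) : Prop :=
  ∀ C : G.Circuit, (∀ i, C.edge i ∈ F) → Even (C.negCount σ)

end Multigraph

open Multigraph


section AuxRatKer
open Matrix


section RatKer

variable {V E : Type} [Fintype V] [Fintype E] [DecidableEq V] [DecidableEq E]

lemma castHom_mulVec {m n : Type} [Fintype n] (M : Matrix m n ℚ) (x : n → ℚ) (i : m) :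
    ((M.mulVec x i : ℚ) : ℝ) = (M.map ((↑) : ℚ → ℝ)).mulVec (fun j => ((x j : ℚ) : ℝ)) i := by
  have := RingHom.map_mulVec (Rat.castHom ℝ) M x i
  simpa [Function.comp_def] using this

lemma exists_rat_ker (A : Matrix V E ℚ) (f : E → ℝ)
    (hf : (A.map ((↑) : ℚ → ℝ)).mulVec f = 0) (habs : ∀ e, 1 ≤ |f e|) :
    ∃ g : E → ℚ, A.mulVec g = 0 ∧ ∀ e, g e ≠ 0 := by
  classical
  set Aℝ : Matrix V E ℝ := A.map ((↑) : ℚ → ℝ) with hAR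
  set ρ : (E → ℚ) → (E → ℝ) := fun g e => ((g e : ℚ) : ℝ) with hρ
  set S : Set (E → ℝ) := ρ '' {g | A.mulVec g = 0} with hS
  have hSker : ∀ x ∈ S, Aℝ.mulVec x = 0 := by
    rintro x ⟨g, hg, rfl⟩
    funext v
    have hg0 : A.mulVec g v = 0 := by rw [hg]; rfl
    rw [← castHom_mulVec A g v] at *
    simp [hρ, hg0]
  -- rank/range fact over ℚ
  have hrange : LinearMap.range ((A * Aᵀ).mulVecLin) = LinearMap.range A.mulVecLin := by
    apply Submodule.eq_of_le_of_finrank_eq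
    · rw [Matrix.mulVecLin_mul]; exact LinearMap.range_comp_le_range _ _
    · exact Matrix.rank_self_mul_transpose A
  have hdecomp : ∀ u : E → ℚ, ∃ g, A.mulVec g = 0 ∧ ∃ y, u = g + Aᵀ.mulVec y := by
    intro u
    have hmem : A.mulVecLin u ∈ LinearMap.range ((A * Aᵀ).mulVecLin) := by
      rw [hrange]; exact ⟨u, rfl⟩
    obtain ⟨y, hy⟩ := hmem
    refine ⟨u - Aᵀ.mulVec y, ?_, y, (sub_add_cancel u _).symm⟩
    have : A.mulVec (Aᵀ.mulVec y) = A.mulVec u := by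
      rw [Matrix.mulVec_mulVec]
      rw [Matrix.mulVecLin_apply, Matrix.mulVecLin_apply] at hy
      exact hy
    rw [Matrix.mulVec_sub, this, sub_self]
  set Rng : Submodule ℝ (E → ℝ) := LinearMap.range (Aᵀ.map ((↑) : ℚ → ℝ)).mulVecLin with hRng
  have hρ_add : ∀ a b : E → ℚ, ρ (a + b) = ρ a + ρ b := by
    intro a b; funext e; simp [hρ]
  have hstd : ∀ u : E → ℚ, ρ u ∈ Submodule.span ℝ S ⊔ Rng := by
    intro u
    obtain ⟨g, hg, y, rfl⟩ := hdecomp u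
    rw [hρ_add]
    refine Submodule.add_mem_sup (Submodule.subset_span ⟨g, hg, rfl⟩) ?_
    refine ⟨fun v => ((y v : ℚ) : ℝ), ?_⟩
    funext e
    simp only [Matrix.mulVecLin_apply]
    exact (castHom_mulVec Aᵀ y e).symm
  have htop : ∀ x : E → ℝ, x ∈ Submodule.span ℝ S ⊔ Rng := by
    intro x
    have hx : x = ∑ e, x e • (fun e' => if e = e' then (1:ℝ) else 0) := pi_eq_sum_univ x
    rw [hx]
    refine Submodule.sum_mem _ fun e _ => Submodule.smul_mem _ _ ?_
    have : (fun e' => if e = e' then (1:ℝ) else 0)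
        = ρ (fun e' => if e = e' then 1 else 0) := by
      funext e'; simp [hρ, apply_ite ((↑) : ℚ → ℝ)]
    rw [this]; exact hstd _
  obtain ⟨w, hw, u, hu, hsum⟩ := Submodule.mem_sup.mp (htop f)
  have hAw : Aℝ.mulVec w = 0 := by
    have hle : Submodule.span ℝ S ≤ LinearMap.ker Aℝ.mulVecLin := by
      rw [Submodule.span_le]
      intro x hx
      simp only [SetLike.mem_coe, LinearMap.mem_ker]
      ext v
      simpa [Matrix.mulVecLin_apply] using congrFun (hSker x hx) v
    have := hle hw
    rw [LinearMap.mem_ker] at this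
    ext v
    simpa [Matrix.mulVecLin_apply] using congrFun this v
  have hAu : Aℝ.mulVec u = 0 := by
    have : Aℝ.mulVec (w + u) = 0 := by rw [hsum]; exact hf
    rw [Matrix.mulVec_add, hAw, zero_add] at this
    exact this
  have hu0 : u = 0 := by
    obtain ⟨z, hz⟩ := hu
    have hzu : (Aᵀ.map ((↑) : ℚ → ℝ)).mulVec z = u := by
      simpa [Matrix.mulVecLin_apply] using hz
    have hker := Matrix.ker_mulVecLin_transpose_mul_self (Aᵀ.map ((↑) : ℚ → ℝ))
    have htr : (Aᵀ.map ((↑) : ℚ → ℝ))ᵀ = Aℝ := by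
      rw [hAR, Matrix.transpose_map, Matrix.transpose_transpose]
    have hzmem : z ∈ LinearMap.ker ((Aᵀ.map ((↑) : ℚ → ℝ))ᵀ * (Aᵀ.map ((↑) : ℚ → ℝ))).mulVecLin := by
      rw [LinearMap.mem_ker]
      ext e
      rw [Matrix.mulVecLin_apply, ← Matrix.mulVec_mulVec, htr, hzu]
      simpa using congrFun hAu e
    rw [hker, LinearMap.mem_ker] at hzmem
    rw [← hzu]
    rw [Matrix.mulVecLin_apply] at hzmem
    rw [hzmem]
  have hfspan : f ∈ Submodule.span ℝ S := by
    rw [← hsum, hu0, add_zero]; exact hw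
  -- closure argument
  have h0S : (0 : E → ℝ) ∈ S := ⟨0, by simp [Matrix.mulVec_zero], by funext e; simp [hρ]⟩
  have haddS : ∀ a ∈ S, ∀ b ∈ S, a + b ∈ S := by
    rintro _ ⟨g1, h1, rfl⟩ _ ⟨g2, h2, rfl⟩
    exact ⟨g1 + g2, by simp [Matrix.mulVec_add, Set.mem_setOf_eq] at *; simp [h1, h2],
      by funext e; simp [hρ]⟩
  have hsmulS : ∀ (q : ℚ), ∀ a ∈ S, (q : ℝ) • a ∈ S := by
    rintro q _ ⟨g, hg, rfl⟩
    refine ⟨q • g, ?_, ?_⟩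
    · simp only [Set.mem_setOf_eq] at hg ⊢
      rw [Matrix.mulVec_smul, hg, smul_zero]
    · funext e; simp [hρ]
  have hsmulS_cl : ∀ (r : ℝ), ∀ a ∈ S, r • a ∈ closure S := by
    intro r a ha
    have hr : r ∈ closure (Set.range ((↑) : ℚ → ℝ)) := Rat.denseRange_cast r
    have hmt : Set.MapsTo (fun c : ℝ => c • a) (Set.range ((↑) : ℚ → ℝ)) S := by
      rintro _ ⟨q, rfl⟩
      exact hsmulS q a ha
    have h2 := map_mem_closure (f := fun c : ℝ => c • a)
      (continuous_id.smul continuous_const) hr hmt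
    simpa using h2
  have hsmul_cl : ∀ (r : ℝ), ∀ x ∈ closure S, r • x ∈ closure S := by
    intro r x hx
    have hmt2 : Set.MapsTo (fun y : E → ℝ => r • y) S (closure S) := fun a ha => hsmulS_cl r a ha
    have h3 := map_mem_closure (f := fun y : E → ℝ => r • y)
      (continuous_const_smul r) hx hmt2
    simpa [closure_closure] using h3
  have hfcl : f ∈ closure S := by
    refine Submodule.span_induction (fun x hx => subset_closure hx) (subset_closure h0S)
      (fun x y _ _ hx hy => map_mem_closure₂ continuous_add hx hy haddS)
      (fun r x _ hx => hsmul_cl r x hx) hfspan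
  obtain ⟨b, hbS, hdist⟩ := Metric.mem_closure_iff.mp hfcl 1 one_pos
  obtain ⟨g, hg, rfl⟩ := hbS
  refine ⟨g, hg, fun e => ?_⟩
  intro h0
  have hde := (dist_pi_lt_iff one_pos).mp hdist e
  rw [Real.dist_eq] at hde
  have : ρ g e = 0 := by simp [hρ, h0]
  rw [this, sub_zero] at hde
  exact absurd hde (not_lt.mpr (habs e))

end RatKer


lemma exists_int_scale {E : Type} [Fintype E] [DecidableEq E] (g : E → ℚ) :
    ∃ (N : ℕ) (h : E → ℤ), 0 < N ∧ ∀ e, (h e : ℚ) = (N : ℚ) * g e := by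
  classical
  set N : ℕ := ∏ e, (g e).den with hN
  refine ⟨N, fun e => (g e).num * ((N / (g e).den : ℕ) : ℤ), Finset.prod_pos (fun e _ => (g e).pos), fun e => ?_⟩
  have hdvd : (g e).den ∣ N := Finset.dvd_prod_of_mem _ (Finset.mem_univ e)
  have hden : ((g e).den : ℚ) ≠ 0 := Nat.cast_ne_zero.mpr (g e).den_nz
  rw [Int.cast_mul, Int.cast_natCast, Nat.cast_div hdvd hden]
  conv_rhs => rw [← Rat.num_div_den (g e)]
  field_simp

end AuxRatKer

section Glue
open Multigraph
variable {V E : Type} [Fintype V] [Fintype E] [DecidableEq V] [DecidableEq E]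

lemma boundary_eq_sum' {R : Type} [CommRing R] (G : Multigraph V E) (τ : E → V → ℤˣ)
    (x : E → R) (v : V) :
    G.boundary τ x v = ∑ e, (if G.Inc v e then (((τ e v : ℤˣ) : ℤ) : R) else 0) * x e := by
  rw [Multigraph.boundary, Multigraph.incEdges, Finset.sum_filter]
  exact Finset.sum_congr rfl fun e _ => by split <;> simp

lemma intflow_nonempty (G : Multigraph V E) (σ : E → ℤˣ) (hadm : G.FlowAdmissible σ) :
    {n : ℕ | G.HasIntNZFlow σ n}.Nonempty := by
  classical
  obtain ⟨r, hr, f, τ, hτ, hbd, hbdd⟩ := hadm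
  set A : Matrix V E ℚ :=
    Matrix.of fun v e => if G.Inc v e then (((τ e v : ℤˣ) : ℤ) : ℚ) else 0 with hA
  have hf : (A.map ((↑) : ℚ → ℝ)).mulVec f = 0 := by
    funext v
    have hbv : (A.map ((↑) : ℚ → ℝ)).mulVec f v = G.boundary τ f v := by
      rw [boundary_eq_sum']
      simp [Matrix.mulVec, dotProduct, hA, Matrix.map_apply, apply_ite ((↑) : ℚ → ℝ)]
    rw [hbv, hbd v]; rfl
  obtain ⟨g, hg, hgne⟩ := exists_rat_ker A f hf (fun e => (hbdd e).1)
  obtain ⟨N, h, hNpos, hcast⟩ := exists_int_scale g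
  have hhne : ∀ e, h e ≠ 0 := by
    intro e he
    have h2 := hcast e
    rw [he] at h2
    have : (N : ℚ) ≠ 0 := Nat.cast_ne_zero.mpr hNpos.ne'
    have : g e = 0 := by
      rcases mul_eq_zero.mp h2.symm with h3 | h3
      · exact absurd h3 this
      · exact h3
    exact hgne e this
  have hbd0 : ∀ v, G.boundary τ h v = 0 := by
    intro v
    have hQ : G.boundary τ (fun e => ((h e : ℤ) : ℚ)) v = 0 := by
      rw [boundary_eq_sum']
      have hterm : ∀ e : E, (if G.Inc v e then (((τ e v : ℤˣ) : ℤ) : ℚ) else 0) * ((h e : ℚ))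
          = (N : ℚ) * ((if G.Inc v e then (((τ e v : ℤˣ) : ℤ) : ℚ) else 0) * g e) := by
        intro e; rw [hcast e]; ring
      rw [Finset.sum_congr rfl fun e _ => hterm e, ← Finset.mul_sum]
      have hAg : ∑ e, (if G.Inc v e then (((τ e v : ℤˣ) : ℤ) : ℚ) else 0) * g e = 0 := by
        have h4 := congrFun hg v
        simpa [Matrix.mulVec, dotProduct, hA] using h4
      rw [hAg, mul_zero]
    have hcast2 : ((G.boundary τ h v : ℤ) : ℚ) = G.boundary τ (fun e => ((h e : ℤ) : ℚ)) v := by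
      rw [Multigraph.boundary, Multigraph.boundary]
      push_cast
      rfl
    have h5 := hcast2.trans hQ
    exact_mod_cast h5
  refine ⟨2 + Finset.univ.sup fun e => (h e).natAbs, h, τ, hτ, ?_, fun e => ⟨Int.one_le_abs (hhne e), ?_⟩⟩
  · intro v
    have := hbd0 v
    simpa [Multigraph.boundary] using this
  · have hle : (h e).natAbs ≤ Finset.univ.sup fun e => (h e).natAbs :=
      Finset.le_sup (f := fun e => (h e).natAbs) (Finset.mem_univ e)
    rw [Int.abs_eq_natAbs]
    omega

end Glue

/-- Let `G` be a cubic graph that does not have a `1`-factor.  If `k` is an integer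
with `k ∈ S̄(G)`, then `k ≥ 5`. -/
theorem stmt14 {V E : Type} [Fintype V] [Fintype E] [DecidableEq V] [DecidableEq E]
    (G : Multigraph V E) (hcubic : G.IsRegular 3) (h1f : ¬ G.HasFactor 1)
    (k : ℕ) (hk : k ∈ G.IntSpectrum) :
    5 ≤ k := by
  classical
  obtain ⟨σ, hadm, hFi⟩ := hk
  by_contra h5
  push_neg at h5
  have hne := intflow_nonempty G σ hadm
  have hkmem : G.HasIntNZFlow σ k := by
    have hmem := Nat.sInf_mem hne
    rw [Multigraph.Fi] at hFi
    rwa [hFi] at hmem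
  obtain ⟨f, τ, hτ, hbd, hbdd⟩ := hkmem
  apply h1f
  refine ⟨Finset.univ.filter fun e => f e % 2 = 0, ?_⟩
  intro v
  have hs : (G.incEdges v).card = 3 := hcubic v
  have h0 : ∑ e ∈ G.incEdges v, ((τ e v : ℤˣ) : ℤ) * f e = 0 := by
    have := hbd v
    simpa [Multigraph.boundary] using this
  have habs : ∀ e, 1 ≤ |f e| ∧ |f e| ≤ 3 := by
    intro e
    obtain ⟨h1, h2⟩ := hbdd e
    refine ⟨h1, le_trans h2 ?_⟩
    have : (k : ℤ) ≤ 4 := by exact_mod_cast Nat.lt_succ_iff.mp h5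
    omega
  set s := G.incEdges v with hsdef
  have hinter : G.incEdges v ∩ (Finset.univ.filter fun e => f e % 2 = 0)
      = s.filter fun e => f e % 2 = 0 := by
    ext e
    simp [hsdef, Finset.mem_filter, Finset.mem_inter]
  rw [hinter]
  have hcard : (s.filter fun e => f e % 2 = 0).card
      + (s.filter fun e => ¬ (f e % 2 = 0)).card = 3 := by
    rw [Finset.card_filter_add_card_filter_not]
    exact hs
  -- parity mod 2
  have hz2 : ((s.filter fun e => ¬ (f e % 2 = 0)).card : ZMod 2) = 0 := by
    have hc : ((∑ e ∈ s, ((τ e v : ℤˣ) : ℤ) * f e : ℤ) : ZMod 2) = 0 := by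
      rw [h0]; simp
    push_cast at hc
    rw [← Finset.sum_filter_add_sum_filter_not s (fun e => f e % 2 = 0)] at hc
    have e1 : ∀ e ∈ s.filter (fun e => f e % 2 = 0),
        ((((τ e v : ℤˣ) : ℤ) : ZMod 2)) * ((f e : ZMod 2)) = 0 := by
      intro e he
      have hmod := (Finset.mem_filter.mp he).2
      have : ((f e : ℤ) : ZMod 2) = 0 :=
        (ZMod.intCast_zmod_eq_zero_iff_dvd _ 2).mpr (Int.dvd_of_emod_eq_zero hmod)
      rw [this, mul_zero]
    have e2 : ∀ e ∈ s.filter (fun e => ¬ (f e % 2 = 0)),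
        ((((τ e v : ℤˣ) : ℤ) : ZMod 2)) * ((f e : ZMod 2)) = 1 := by
      intro e he
      have hmod := (Finset.mem_filter.mp he).2
      have hdvd : (2 : ℤ) ∣ (f e - 1) := by omega
      have h1 : ((f e - 1 : ℤ) : ZMod 2) = 0 :=
        (ZMod.intCast_zmod_eq_zero_iff_dvd _ 2).mpr hdvd
      push_cast at h1
      have hfe : ((f e : ℤ) : ZMod 2) = 1 := by
        have := sub_eq_zero.mp h1
        exact this
      rcases Int.units_eq_one_or (τ e v) with hu | hu <;> rw [hu, hfe] <;> decide
    rw [Finset.sum_congr rfl e1, Finset.sum_congr rfl e2, Finset.sum_const,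
      Finset.sum_const] at hc
    simpa using hc
  have heven : (2 : ℕ) ∣ (s.filter fun e => ¬ (f e % 2 = 0)).card :=
    (ZMod.natCast_eq_zero_iff _ 2).mp hz2
  have hne3 : (s.filter fun e => f e % 2 = 0).card ≠ 3 := by
    intro h3
    have hall : s.filter (fun e => f e % 2 = 0) = s :=
      Finset.eq_of_subset_of_card_le (Finset.filter_subset _ _) (by rw [h3, hs])
    have hval : ∀ e ∈ s, f e = 2 ∨ f e = -2 := by
      intro e he
      have hmod : f e % 2 = 0 := by
        have := Finset.mem_filter.mp (hall.symm ▸ he)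
        exact this.2
      obtain ⟨h1, h2⟩ := habs e
      rcases abs_cases (f e) with ⟨ha, _⟩ | ⟨ha, _⟩ <;> omega
    have hc4 : ((∑ e ∈ s, ((τ e v : ℤˣ) : ℤ) * f e : ℤ) : ZMod 4) = 0 := by
      rw [h0]; simp
    push_cast at hc4
    have e4 : ∀ e ∈ s, ((((τ e v : ℤˣ) : ℤ) : ZMod 4)) * ((f e : ZMod 4)) = 2 := by
      intro e he
      rcases Int.units_eq_one_or (τ e v) with hu | hu <;>
        rcases hval e he with hv | hv <;> rw [hu, hv] <;> decide
    rw [Finset.sum_congr rfl e4, Finset.sum_const, hs] at hc4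
    exact absurd hc4 (by decide)
  omega
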